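/- If X₁ and X₂ are causally path-connected Lorentzian pre-length spaces, then their Lorentzian amalgamation X = X₁ ⊔_A X₂ is causally path-connected: whenever [x] ≤̃ [y] there is a (future-directed) causal curve in X from [x] to [y], and whenever [x] ≪̃ [y] there is a timelike curve. -/

import Mathlib

open Set Metric

variable {α : Type*}

/-- The generating relation identifying `a ∈ A₁` with `f a`. -/
def glueRel {X₁ X₂ : Type*} (A₁ : Set X₁) (f : X₁ → X₂) : X₁ ⊕ X₂ → X₁ ⊕ X₂ → Prop :=
  fun p q => ∃ a ∈ A₁, p = Sum.inl a ∧ q = Sum.inr (f a)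

/-- The equivalence relation generated by `a ∼ f a`. -/
def glueEqv {X₁ X₂ : Type*} (A₁ : Set X₁) (f : X₁ → X₂) : X₁ ⊕ X₂ → X₁ ⊕ X₂ → Prop :=
  Relation.EqvGen (glueRel A₁ f)

def glueSetoid {X₁ X₂ : Type*} (A₁ : Set X₁) (f : X₁ → X₂) : Setoid (X₁ ⊕ X₂) :=
  ⟨glueEqv A₁ f, Relation.EqvGen.is_equivalence _⟩

/-- The disjoint union of two relations. -/
def sumRel {X₁ X₂ : Type*} (r₁ : X₁ → X₁ → Prop) (r₂ : X₂ → X₂ → Prop) :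
    X₁ ⊕ X₂ → X₁ ⊕ X₂ → Prop
  | Sum.inl x, Sum.inl y => r₁ x y
  | Sum.inr x, Sum.inr y => r₂ x y
  | _, _ => False

/-- One step `p ∼ p' R q' ∼ q` of a chain. -/
def glueStep (R eqv : α → α → Prop) : α → α → Prop := fun p q =>
  ∃ p' q', eqv p p' ∧ R p' q' ∧ eqv q' q

/-- The quotient relation: there is a finite chain `x ∼ x₁ R y₁ ∼ x₂ R y₂ ∼ ⋯ ∼ xₙ R yₙ ∼ y`. -/
def quotRel (R eqv : α → α → Prop) : α → α → Prop :=
  Relation.TransGen (glueStep R eqv)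

/-- A gluing chain from `x` to `y`: a nonempty list of pairs `(xᵢ, yᵢ)` with
`x ∼ x₁`, `yᵢ ∼ xᵢ₊₁`, and `yₙ ∼ y`. -/
def IsGlueChain (eqv : α → α → Prop) (x y : α) (l : List (α × α)) : Prop :=
  l ≠ [] ∧ l.Chain' (fun p q => eqv p.2 q.1) ∧
    (∃ p, l.head? = some p ∧ eqv x p.1) ∧ (∃ p, l.getLast? = some p ∧ eqv p.2 y)

/-- A causal chain: a gluing chain in which each pair is causally related. -/
def IsCausalChain (le eqv : α → α → Prop) (x y : α) (l : List (α × α)) : Prop :=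
  IsGlueChain eqv x y l ∧ ∀ p ∈ l, le p.1 p.2

/-- The quotient time separation: supremum of `Σ τ(xᵢ,yᵢ)` over causal chains. -/
noncomputable def quotTau (τ : α → α → ENNReal) (le eqv : α → α → Prop) (x y : α) : ENNReal :=
  sSup {v | ∃ l, IsCausalChain le eqv x y l ∧ v = (l.map fun p => τ p.1 p.2).sum}

/-- The quotient semi-metric: infimum of `Σ d(xᵢ,yᵢ)` over gluing chains. -/
noncomputable def quotDist (D : α → α → ENNReal) (eqv : α → α → Prop) (x y : α) : ENNReal :=
  sInf {v | ∃ l, IsGlueChain eqv x y l ∧ v = (l.map fun p => D p.1 p.2).sum}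

/-- The disjoint union time separation (zero across the two factors). -/
noncomputable def sumTau {X₁ X₂ : Type*} (τ₁ : X₁ → X₁ → ENNReal) (τ₂ : X₂ → X₂ → ENNReal) :
    X₁ ⊕ X₂ → X₁ ⊕ X₂ → ENNReal
  | Sum.inl x, Sum.inl y => τ₁ x y
  | Sum.inr x, Sum.inr y => τ₂ x y
  | _, _ => 0

/-- The disjoint union (extended) distance (infinite across the two factors). -/
noncomputable def sumEDist {X₁ X₂ : Type*} [PseudoEMetricSpace X₁] [PseudoEMetricSpace X₂] :
    X₁ ⊕ X₂ → X₁ ⊕ X₂ → ENNReal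
  | Sum.inl x, Sum.inl y => edist x y
  | Sum.inr x, Sum.inr y => edist x y
  | _, _ => ⊤

/-- A future-directed causal curve w.r.t. an extended distance `D` (locally Lipschitz)
and a causal relation `R` (monotone). -/
def IsCausalCurveE (D : α → α → ENNReal) (R : α → α → Prop) (γ : ℝ → α) (a b : ℝ) : Prop :=
  a ≤ b ∧
  (∀ t ∈ Set.Icc a b, ∃ K : NNReal, ∃ ε > (0:ℝ), ∀ s ∈ Set.Icc a b, ∀ s' ∈ Set.Icc a b,
      |s - t| < ε → |s' - t| < ε → D (γ s) (γ s') ≤ (K : ENNReal) * ENNReal.ofReal |s - s'|) ∧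
  ∀ s ∈ Set.Icc a b, ∀ t ∈ Set.Icc a b, s < t → R (γ s) (γ t)

/-- The `τ`-length of a curve: infimum over partitions of `Σ τ(γ(tᵢ),γ(tᵢ₊₁))`. -/
noncomputable def tauLen (T : α → α → ENNReal) (γ : ℝ → α) (a b : ℝ) : ENNReal :=
  sInf {v | ∃ n : ℕ, ∃ t : Fin (n + 1) → ℝ, StrictMono t ∧ t 0 = a ∧ t (Fin.last n) = b ∧
    v = ∑ i : Fin n, T (γ (t i.castSucc)) (γ (t i.succ))}

/-- The `d`-length of a curve: supremum over partitions of `Σ d(γ(tᵢ),γ(tᵢ₊₁))`. -/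
noncomputable def dLen (D : α → α → ENNReal) (γ : ℝ → α) (a b : ℝ) : ENNReal :=
  sSup {v | ∃ n : ℕ, ∃ t : Fin (n + 1) → ℝ, StrictMono t ∧ t 0 = a ∧ t (Fin.last n) = b ∧
    v = ∑ i : Fin n, D (γ (t i.castSucc)) (γ (t i.succ))}

/-- The quotient relation, descended to the quotient space. -/
def qRel {X₁ X₂ : Type*} (A₁ : Set X₁) (f : X₁ → X₂) (R : X₁ ⊕ X₂ → X₁ ⊕ X₂ → Prop)
    (p q : Quotient (glueSetoid A₁ f)) : Prop :=
  ∃ x y, Quotient.mk (glueSetoid A₁ f) x = p ∧ Quotient.mk (glueSetoid A₁ f) y = q ∧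
    quotRel R (glueEqv A₁ f) x y

/-- The quotient semi-metric, descended to the quotient space. -/
noncomputable def qDist {X₁ X₂ : Type*} [PseudoEMetricSpace X₁] [PseudoEMetricSpace X₂]
    (A₁ : Set X₁) (f : X₁ → X₂) (p q : Quotient (glueSetoid A₁ f)) : ENNReal :=
  quotDist sumEDist (glueEqv A₁ f) p.out q.out

/-- The quotient time separation, descended to the quotient space. -/
noncomputable def qTau {X₁ X₂ : Type*} (A₁ : Set X₁) (f : X₁ → X₂)
    (τ₁ : X₁ → X₁ → ENNReal) (τ₂ : X₂ → X₂ → ENNReal)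
    (le₁ : X₁ → X₁ → Prop) (le₂ : X₂ → X₂ → Prop)
    (p q : Quotient (glueSetoid A₁ f)) : ENNReal :=
  quotTau (sumTau τ₁ τ₂) (sumRel le₁ le₂) (glueEqv A₁ f) p.out q.out

section Aux

variable {α : Type*}

lemma quotRel_eqv_right {R eqv : α → α → Prop} (heqv : Transitive eqv)
    {x y z : α} (h : quotRel R eqv x y) (hyz : eqv y z) : quotRel R eqv x z := by
  induction h with
  | single h =>
    obtain ⟨p', q', e1, hr, e2⟩ := h
    exact Relation.TransGen.single ⟨p', q', e1, hr, heqv e2 hyz⟩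
  | tail _ h ih =>
    obtain ⟨p', q', e1, hr, e2⟩ := h
    exact Relation.TransGen.tail (by assumption) ⟨p', q', e1, hr, heqv e2 hyz⟩

lemma glueEqv_trans {X₁ X₂ : Type*} {A₁ : Set X₁} {f : X₁ → X₂} :
    Transitive (glueEqv A₁ f) := fun _ _ _ h h' => Relation.EqvGen.trans _ _ _ h h'

lemma qRel_trans {X₁ X₂ : Type*} {A₁ : Set X₁} {f : X₁ → X₂}
    {R : X₁ ⊕ X₂ → X₁ ⊕ X₂ → Prop} {p q r : Quotient (glueSetoid A₁ f)}
    (h₁ : qRel A₁ f R p q) (h₂ : qRel A₁ f R q r) : qRel A₁ f R p r := by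
  obtain ⟨x, y, hx, hy, hxy⟩ := h₁
  obtain ⟨y', z, hy', hz, hyz⟩ := h₂
  have heq : glueEqv A₁ f y y' := Quotient.exact (s := glueSetoid A₁ f) (hy.trans hy'.symm)
  exact ⟨x, z, hx, hz, (quotRel_eqv_right glueEqv_trans hxy heq).trans hyz⟩

lemma IsGlueChain.append {eqv : α → α → Prop} (heqv : Transitive eqv)
    {x y z : α} {l₁ l₂ : List (α × α)}
    (h₁ : IsGlueChain eqv x y l₁) (h₂ : IsGlueChain eqv y z l₂) :
    IsGlueChain eqv x z (l₁ ++ l₂) := by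
  obtain ⟨hne₁, hc₁, ⟨p₁, hp₁, hxp₁⟩, ⟨q₁, hq₁, hq₁y⟩⟩ := h₁
  obtain ⟨hne₂, hc₂, ⟨p₂, hp₂, hyp₂⟩, ⟨q₂, hq₂, hq₂z⟩⟩ := h₂
  refine ⟨by simp [hne₁], ?_, ⟨p₁, ?_, hxp₁⟩, ⟨q₂, ?_, hq₂z⟩⟩
  · refine List.isChain_append.2 ⟨hc₁, hc₂, ?_⟩
    intro u hu v hv
    rw [hq₁] at hu; rw [hp₂] at hv
    cases hu; cases hv
    exact heqv hq₁y hyp₂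
  · rw [List.head?_append, hp₁]; rfl
  · rw [List.getLast?_append, hq₂]; rfl

lemma quotDist_triangle {D : α → α → ENNReal} {eqv : α → α → Prop} (heqv : Transitive eqv)
    (x y z : α) : quotDist D eqv x z ≤ quotDist D eqv x y + quotDist D eqv y z := by
  unfold quotDist
  rw [ENNReal.sInf_add]
  refine le_iInf₂ fun v₁ hv₁ => ?_
  rw [add_comm, ENNReal.sInf_add]
  refine le_iInf₂ fun v₂ hv₂ => ?_
  obtain ⟨l₁, hl₁, rfl⟩ := hv₁
  obtain ⟨l₂, hl₂, rfl⟩ := hv₂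
  exact sInf_le ⟨l₁ ++ l₂, hl₁.append heqv hl₂, by simp [add_comm]⟩

end Aux

section Aux2

variable {X₁ X₂ : Type*} [MetricSpace X₁] [MetricSpace X₂] {A₁ : Set X₁} {f : X₁ → X₂}

lemma glueEqv_out_mk (x : X₁ ⊕ X₂) :
    glueEqv A₁ f (Quotient.mk (glueSetoid A₁ f) x).out x :=
  Quotient.exact (Quotient.out_eq (Quotient.mk (glueSetoid A₁ f) x))

lemma qDist_mk_le (u w : X₁ ⊕ X₂) :
    qDist A₁ f (Quotient.mk (glueSetoid A₁ f) u) (Quotient.mk (glueSetoid A₁ f) w) ≤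
      sumEDist u w := by
  refine sInf_le ⟨[(u, w)], ⟨by simp, List.isChain_singleton _, ⟨(u, w), rfl, glueEqv_out_mk u⟩,
    ⟨(u, w), rfl, Relation.EqvGen.symm _ _ (glueEqv_out_mk w)⟩⟩, by simp⟩

lemma qRel_mk {r₁ : X₁ → X₁ → Prop} {r₂ : X₂ → X₂ → Prop} {u w : X₁ ⊕ X₂}
    (h : sumRel r₁ r₂ u w) :
    qRel A₁ f (sumRel r₁ r₂) (Quotient.mk (glueSetoid A₁ f) u)
      (Quotient.mk (glueSetoid A₁ f) w) :=
  ⟨u, w, rfl, rfl, Relation.TransGen.single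
    ⟨u, w, Relation.EqvGen.refl _, h, Relation.EqvGen.refl _⟩⟩

lemma proj_curve_inl {r₁ : X₁ → X₁ → Prop} {r₂ : X₂ → X₂ → Prop}
    {γ : ℝ → X₁} {a b : ℝ} (h : IsCausalCurveE (fun u w => edist u w) r₁ γ a b) :
    IsCausalCurveE (qDist A₁ f) (qRel A₁ f (sumRel r₁ r₂))
      (fun t => Quotient.mk (glueSetoid A₁ f) (Sum.inl (γ t))) a b := by
  obtain ⟨hab, hlip, hmono⟩ := h
  refine ⟨hab, ?_, ?_⟩
  · intro t ht
    obtain ⟨K, ε, hε, hK⟩ := hlip t ht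
    refine ⟨K, ε, hε, fun s hs s' hs' h1 h2 => ?_⟩
    exact le_trans (qDist_mk_le _ _) (hK s hs s' hs' h1 h2)
  · intro s hs t ht hst
    exact qRel_mk (hmono s hs t ht hst)

lemma proj_curve_inr {r₁ : X₁ → X₁ → Prop} {r₂ : X₂ → X₂ → Prop}
    {γ : ℝ → X₂} {a b : ℝ} (h : IsCausalCurveE (fun u w => edist u w) r₂ γ a b) :
    IsCausalCurveE (qDist A₁ f) (qRel A₁ f (sumRel r₁ r₂))
      (fun t => Quotient.mk (glueSetoid A₁ f) (Sum.inr (γ t))) a b := by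
  obtain ⟨hab, hlip, hmono⟩ := h
  refine ⟨hab, ?_, ?_⟩
  · intro t ht
    obtain ⟨K, ε, hε, hK⟩ := hlip t ht
    refine ⟨K, ε, hε, fun s hs s' hs' h1 h2 => ?_⟩
    exact le_trans (qDist_mk_le _ _) (hK s hs s' hs' h1 h2)
  · intro s hs t ht hst
    exact qRel_mk (hmono s hs t ht hst)

lemma qDist_triangle (p q r : Quotient (glueSetoid A₁ f)) :
    qDist A₁ f p r ≤ qDist A₁ f p q + qDist A₁ f q r := by
  unfold qDist
  calc quotDist sumEDist (glueEqv A₁ f) p.out r.out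
      ≤ quotDist sumEDist (glueEqv A₁ f) p.out q.out +
        quotDist sumEDist (glueEqv A₁ f) q.out r.out :=
        quotDist_triangle glueEqv_trans _ _ _

end Aux2

section Aux3

variable {β : Type*}

lemma concat_causal {D : β → β → ENNReal} {R : β → β → Prop}
    (Dtri : ∀ x y z, D x z ≤ D x y + D y z)
    (Rtrans : ∀ x y z, R x y → R y z → R x z)
    {γ₁ γ₂ : ℝ → β} {a₁ b₁ a₂ b₂ : ℝ}
    (h₁ : IsCausalCurveE D R γ₁ a₁ b₁) (h₂ : IsCausalCurveE D R γ₂ a₂ b₂)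
    (hj : γ₁ b₁ = γ₂ a₂) :
    ∃ γ a b, IsCausalCurveE D R γ a b ∧ γ a = γ₁ a₁ ∧ γ b = γ₂ b₂ := by
  obtain ⟨hab₁, hlip₁, hmono₁⟩ := h₁
  obtain ⟨hab₂, hlip₂, hmono₂⟩ := h₂
  set b : ℝ := b₁ + (b₂ - a₂) with hb
  have hb₁b : b₁ ≤ b := by simp [hb]; linarith
  set γ : ℝ → β := fun t => if t ≤ b₁ then γ₁ t else γ₂ (t - b₁ + a₂) with hγ
  have hγ1 : ∀ t, t ≤ b₁ → γ t = γ₁ t := fun t ht => if_pos ht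
  have hγ2 : ∀ t, b₁ ≤ t → γ t = γ₂ (t - b₁ + a₂) := by
    intro t ht
    rcases eq_or_lt_of_le ht with h | h
    · simp [hγ, ← h, hj]
    · simp [hγ, not_le.2 h]
  -- membership helpers
  have mem1 : ∀ s, a₁ ≤ s → s ≤ b₁ → s ∈ Set.Icc a₁ b₁ := fun s h h' => ⟨h, h'⟩
  have mem2 : ∀ s, b₁ ≤ s → s ≤ b → s - b₁ + a₂ ∈ Set.Icc a₂ b₂ := by
    intro s h h'
    constructor <;> [linarith; (rw [hb] at h'; linarith)]
  refine ⟨γ, a₁, b, ⟨le_trans hab₁ hb₁b, ?_, ?_⟩, hγ1 a₁ hab₁, ?_⟩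
  · -- local Lipschitz
    intro t ht
    rcases lt_trichotomy t b₁ with htb | htb | htb
    · obtain ⟨K, ε, hε, hK⟩ := hlip₁ t ⟨ht.1, le_of_lt htb⟩
      refine ⟨K, min ε (b₁ - t), lt_min hε (by linarith), ?_⟩
      intro s hs s' hs' h1 h2
      have hsb : s ≤ b₁ := by
        have := abs_lt.1 (lt_of_lt_of_le h1 (min_le_right _ _)); linarith
      have hsb' : s' ≤ b₁ := by
        have := abs_lt.1 (lt_of_lt_of_le h2 (min_le_right _ _)); linarith
      rw [hγ1 s hsb, hγ1 s' hsb']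
      exact hK s ⟨hs.1, hsb⟩ s' ⟨hs'.1, hsb'⟩ (lt_of_lt_of_le h1 (min_le_left _ _))
        (lt_of_lt_of_le h2 (min_le_left _ _))
    · -- t = b₁ : junction
      subst htb
      obtain ⟨K₁, ε₁, hε₁, hK₁⟩ := hlip₁ t ⟨ht.1, le_refl _⟩
      obtain ⟨K₂, ε₂, hε₂, hK₂⟩ := hlip₂ a₂ ⟨le_refl _, hab₂⟩
      refine ⟨K₁ + K₂, min ε₁ ε₂, lt_min hε₁ hε₂, ?_⟩
      intro s hs s' hs' h1 h2
      have h1a : |s - t| < ε₁ := lt_of_lt_of_le h1 (min_le_left _ _)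
      have h1b : |s - t| < ε₂ := lt_of_lt_of_le h1 (min_le_right _ _)
      have h2a : |s' - t| < ε₁ := lt_of_lt_of_le h2 (min_le_left _ _)
      have h2b : |s' - t| < ε₂ := lt_of_lt_of_le h2 (min_le_right _ _)
      have hKle₁ : (K₁ : ENNReal) ≤ ((K₁ + K₂ : NNReal) : ENNReal) := by
        simp
      have hKle₂ : (K₂ : ENNReal) ≤ ((K₁ + K₂ : NNReal) : ENNReal) := by
        simp
      -- helper for piece-1 pairs
      have P1 : ∀ u, a₁ ≤ u → u ≤ t → |u - t| < ε₁ → ∀ v, a₁ ≤ v → v ≤ t → |v - t| < ε₁ →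
          D (γ u) (γ v) ≤ (K₁ : ENNReal) * ENNReal.ofReal |u - v| := by
        intro u hu hu' hue v hv hv' hve
        rw [hγ1 u hu', hγ1 v hv']
        exact hK₁ u ⟨hu, hu'⟩ v ⟨hv, hv'⟩ hue hve
      have P2 : ∀ u, t ≤ u → u ≤ b → |u - t| < ε₂ → ∀ v, t ≤ v → v ≤ b → |v - t| < ε₂ →
          D (γ u) (γ v) ≤ (K₂ : ENNReal) * ENNReal.ofReal |u - v| := by
        intro u hu hu' hue v hv hv' hve
        rw [hγ2 u hu, hγ2 v hv]
        have e1 : |u - t + a₂ - a₂| = |u - t| := by ring_nf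
        have e2 : |v - t + a₂ - a₂| = |v - t| := by ring_nf
        have e3 : |u - t + a₂ - (v - t + a₂)| = |u - v| := by ring_nf
        have := hK₂ (u - t + a₂) (mem2 u hu hu') (v - t + a₂) (mem2 v hv hv')
          (by rw [e1]; exact hue) (by rw [e2]; exact hve)
        rwa [e3] at this
      rcases le_total s t with hst | hst <;> rcases le_total s' t with hst' | hst'
      · exact le_trans (P1 s hs.1 hst h1a s' hs'.1 hst' h2a)
          (mul_le_mul_left hKle₁ _)
      · -- s ≤ t ≤ s'
        refine le_trans (Dtri (γ s) (γ t) (γ s')) ?_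
        have hA := P1 s hs.1 hst h1a t ht.1 le_rfl (by simpa using lt_min hε₁ hε₂ |>.trans_le (min_le_left _ _))
        have hB := P2 t le_rfl ht.2 (by simpa using hε₂) s' hst' hs'.2 h2b
        refine le_trans (add_le_add hA hB) ?_
        have e1 : |s - t| = t - s := by rw [abs_sub_comm, abs_of_nonneg (by linarith)]
        have e2 : |t - s'| = s' - t := by rw [abs_sub_comm, abs_of_nonneg (by linarith)]
        have e3 : |s - s'| = (t - s) + (s' - t) := by
          rw [abs_sub_comm, abs_of_nonneg (by linarith)]; ring
        rw [e1, e2, e3, ENNReal.ofReal_add (by linarith) (by linarith)]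
        rw [mul_add]
        exact add_le_add (mul_le_mul_left hKle₁ _) (mul_le_mul_left hKle₂ _)
      · -- s' ≤ t ≤ s
        refine le_trans (Dtri (γ s) (γ t) (γ s')) ?_
        have hA := P2 s hst hs.2 h1b t le_rfl ht.2 (by simpa using hε₂)
        have hB := P1 t ht.1 le_rfl (by simpa using hε₁) s' hs'.1 hst' h2a
        refine le_trans (add_le_add hA hB) ?_
        have e1 : |s - t| = s - t := abs_of_nonneg (by linarith)
        have e2 : |t - s'| = t - s' := abs_of_nonneg (by linarith)
        have e3 : |s - s'| = (s - t) + (t - s') := by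
          rw [abs_of_nonneg (by linarith)]; ring
        rw [e1, e2, e3, ENNReal.ofReal_add (by linarith) (by linarith)]
        rw [mul_add]
        exact add_le_add (mul_le_mul_left hKle₂ _) (mul_le_mul_left hKle₁ _)
      · exact le_trans (P2 s hst hs.2 h1b s' hst' hs'.2 h2b)
          (mul_le_mul_left hKle₂ _)
    · -- b₁ < t
      obtain ⟨K, ε, hε, hK⟩ := hlip₂ (t - b₁ + a₂) (mem2 t (le_of_lt htb) ht.2)
      refine ⟨K, min ε (t - b₁), lt_min hε (by linarith), ?_⟩
      intro s hs s' hs' h1 h2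
      have hsb : b₁ ≤ s := by
        have := abs_lt.1 (lt_of_lt_of_le h1 (min_le_right _ _)); linarith
      have hsb' : b₁ ≤ s' := by
        have := abs_lt.1 (lt_of_lt_of_le h2 (min_le_right _ _)); linarith
      rw [hγ2 s hsb, hγ2 s' hsb']
      have e1 : |s - b₁ + a₂ - (t - b₁ + a₂)| = |s - t| := by ring_nf
      have e2 : |s' - b₁ + a₂ - (t - b₁ + a₂)| = |s' - t| := by ring_nf
      have e3 : |s - b₁ + a₂ - (s' - b₁ + a₂)| = |s - s'| := by ring_nf
      have := hK (s - b₁ + a₂) (mem2 s hsb hs.2) (s' - b₁ + a₂) (mem2 s' hsb' hs'.2)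
        (by rw [e1]; exact lt_of_lt_of_le h1 (min_le_left _ _))
        (by rw [e2]; exact lt_of_lt_of_le h2 (min_le_left _ _))
      rwa [e3] at this
  · -- monotonicity
    intro s hs t ht hst
    rcases le_total t b₁ with htb | htb
    · rw [hγ1 s (le_trans hst.le htb), hγ1 t htb]
      exact hmono₁ s ⟨hs.1, le_trans hst.le htb⟩ t ⟨le_trans hs.1 hst.le, htb⟩ hst
    · rcases le_or_gt b₁ s with hsb | hsb
      · rw [hγ2 s hsb, hγ2 t htb]
        exact hmono₂ _ (mem2 s hsb hs.2) _ (mem2 t htb ht.2) (by linarith)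
      · rcases eq_or_lt_of_le htb with h | htb'
        · rw [hγ1 s hsb.le, hγ1 t h.symm.le]
          exact hmono₁ s ⟨hs.1, hsb.le⟩ t ⟨le_trans hs.1 hst.le, h.symm.le⟩ hst
        · have hR1 : R (γ s) (γ b₁) := by
            rw [hγ1 s hsb.le, hγ1 b₁ le_rfl]
            exact hmono₁ s ⟨hs.1, hsb.le⟩ b₁ ⟨hab₁, le_rfl⟩ hsb
          have hR2 : R (γ b₁) (γ t) := by
            rw [hγ2 b₁ le_rfl, hγ2 t htb]
            exact hmono₂ _ (by simpa using hab₂) _ (mem2 t htb ht.2) (by linarith)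
          exact Rtrans _ _ _ hR1 hR2
      -- done
  · -- endpoint b
    rw [hγ2 b hb₁b, hb]
    congr 1
    ring

end Aux3

section Main

variable {X₁ X₂ : Type*} [MetricSpace X₁] [MetricSpace X₂]

lemma amalg_step {A₁ : Set X₁} {f : X₁ → X₂}
    {r₁ : X₁ → X₁ → Prop} {r₂ : X₂ → X₂ → Prop}
    (cpc₁ : ∀ x y, r₁ x y → ∃ γ a b,
      IsCausalCurveE (fun u w => edist u w) r₁ γ a b ∧ γ a = x ∧ γ b = y)
    (cpc₂ : ∀ x y, r₂ x y → ∃ γ a b,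
      IsCausalCurveE (fun u w => edist u w) r₂ γ a b ∧ γ a = x ∧ γ b = y)
    {x y : X₁ ⊕ X₂} (h : glueStep (sumRel r₁ r₂) (glueEqv A₁ f) x y) :
    ∃ γ a b, IsCausalCurveE (qDist A₁ f) (qRel A₁ f (sumRel r₁ r₂)) γ a b ∧
      γ a = Quotient.mk (glueSetoid A₁ f) x ∧ γ b = Quotient.mk (glueSetoid A₁ f) y := by
  obtain ⟨p', q', e1, hr, e2⟩ := h
  have hx : Quotient.mk (glueSetoid A₁ f) x = Quotient.mk (glueSetoid A₁ f) p' :=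
    Quotient.sound e1
  have hy : Quotient.mk (glueSetoid A₁ f) q' = Quotient.mk (glueSetoid A₁ f) y :=
    Quotient.sound e2
  match p', q', hr with
  | Sum.inl u, Sum.inl w, hr =>
    obtain ⟨γ, a, b, hc, ha, hb⟩ := cpc₁ u w hr
    exact ⟨fun t => Quotient.mk (glueSetoid A₁ f) (Sum.inl (γ t)), a, b,
      proj_curve_inl hc, by simp only [ha, ← hx], by simp only [hb]; exact hy⟩
  | Sum.inr u, Sum.inr w, hr =>
    obtain ⟨γ, a, b, hc, ha, hb⟩ := cpc₂ u w hr
    exact ⟨fun t => Quotient.mk (glueSetoid A₁ f) (Sum.inr (γ t)), a, b,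
      proj_curve_inr hc, by simp only [ha, ← hx], by simp only [hb]; exact hy⟩

lemma amalg_curve {A₁ : Set X₁} {f : X₁ → X₂}
    {r₁ : X₁ → X₁ → Prop} {r₂ : X₂ → X₂ → Prop}
    (cpc₁ : ∀ x y, r₁ x y → ∃ γ a b,
      IsCausalCurveE (fun u w => edist u w) r₁ γ a b ∧ γ a = x ∧ γ b = y)
    (cpc₂ : ∀ x y, r₂ x y → ∃ γ a b,
      IsCausalCurveE (fun u w => edist u w) r₂ γ a b ∧ γ a = x ∧ γ b = y)
    {x y : X₁ ⊕ X₂} (h : quotRel (sumRel r₁ r₂) (glueEqv A₁ f) x y) :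
    ∃ γ a b, IsCausalCurveE (qDist A₁ f) (qRel A₁ f (sumRel r₁ r₂)) γ a b ∧
      γ a = Quotient.mk (glueSetoid A₁ f) x ∧ γ b = Quotient.mk (glueSetoid A₁ f) y := by
  induction h with
  | single h => exact amalg_step cpc₁ cpc₂ h
  | tail _ h ih =>
    obtain ⟨γ₁, a₁, b₁, hc₁, ha₁, hb₁⟩ := ih
    obtain ⟨γ₂, a₂, b₂, hc₂, ha₂, hb₂⟩ := amalg_step cpc₁ cpc₂ h
    obtain ⟨γ, a, b, hc, ha, hb⟩ := concat_causal (qDist_triangle)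
      (fun _ _ _ => qRel_trans) hc₁ hc₂ (by rw [hb₁, ha₂])
    exact ⟨γ, a, b, hc, by rw [ha, ha₁], by rw [hb, hb₂]⟩

end Main

/-- If `X₁` and `X₂` are causally path-connected, then their amalgamation is causally
path-connected: `[x] ≤̃ [y]` yields a causal curve and `[x] ≪̃ [y]` a timelike curve
from `[x]` to `[y]` in the quotient. -/
theorem amalgamation_causallyPathConnected
    {X₁ X₂ : Type*} [MetricSpace X₁] [MetricSpace X₂]
    (A₁ : Set X₁) (A₂ : Set X₂) (hA₁ : IsClosed A₁) (hA₂ : IsClosed A₂)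
    (f : X₁ → X₂) (g : X₂ → X₁) (hf : Set.BijOn f A₁ A₂)
    (hgf : ∀ a ∈ A₁, g (f a) = a) (hfc : ContinuousOn f A₁) (hgc : ContinuousOn g A₂)
    (hlip : ∀ a ∈ A₁, ∃ ε > (0:ℝ), ∃ K : NNReal, ∀ x ∈ A₁ ∩ Metric.ball a ε,
      ∀ y ∈ A₁ ∩ Metric.ball a ε,
        dist (f x) (f y) ≤ K * dist x y ∧ dist x y ≤ K * dist (f x) (f y))
    (ll₁ le₁ : X₁ → X₁ → Prop) (ll₂ le₂ : X₂ → X₂ → Prop)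
    (τ₁ : X₁ → X₁ → ENNReal) (τ₂ : X₂ → X₂ → ENNReal)
    (le₁_refl : ∀ x, le₁ x x) (le₁_trans : ∀ x y z, le₁ x y → le₁ y z → le₁ x z)
    (le₂_refl : ∀ x, le₂ x x) (le₂_trans : ∀ x y z, le₂ x y → le₂ y z → le₂ x z)
    (ll₁_trans : ∀ x y z, ll₁ x y → ll₁ y z → ll₁ x z)
    (ll₂_trans : ∀ x y z, ll₂ x y → ll₂ y z → ll₂ x z)
    (ll₁_le : ∀ x y, ll₁ x y → le₁ x y) (ll₂_le : ∀ x y, ll₂ x y → le₂ x y)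
    (τ₁_lsc : LowerSemicontinuous fun p : X₁ × X₁ => τ₁ p.1 p.2)
    (τ₂_lsc : LowerSemicontinuous fun p : X₂ × X₂ => τ₂ p.1 p.2)
    (rev_tri₁ : ∀ x y z, le₁ x y → le₁ y z → τ₁ x y + τ₁ y z ≤ τ₁ x z)
    (rev_tri₂ : ∀ x y z, le₂ x y → le₂ y z → τ₂ x y + τ₂ y z ≤ τ₂ x z)
    (ll₁_iff : ∀ x y, ll₁ x y ↔ 0 < τ₁ x y) (ll₂_iff : ∀ x y, ll₂ x y ↔ 0 < τ₂ x y)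
    (ntli₁_future : ∀ a ∈ A₁, (∃ q, ll₁ a q) → ∀ U ∈ nhds a, ∃ b ∈ U ∩ A₁, ll₁ a b)
    (ntli₁_past : ∀ a ∈ A₁, (∃ q, ll₁ q a) → ∀ U ∈ nhds a, ∃ b ∈ U ∩ A₁, ll₁ b a)
    (ntli₂_future : ∀ a ∈ A₂, (∃ q, ll₂ a q) → ∀ U ∈ nhds a, ∃ b ∈ U ∩ A₂, ll₂ a b)
    (ntli₂_past : ∀ a ∈ A₂, (∃ q, ll₂ q a) → ∀ U ∈ nhds a, ∃ b ∈ U ∩ A₂, ll₂ b a)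
    (hpres_le : ∀ a ∈ A₁, ∀ b ∈ A₁, (le₁ a b ↔ le₂ (f a) (f b)))
    (hpres_ll : ∀ a ∈ A₁, ∀ b ∈ A₁, (ll₁ a b ↔ ll₂ (f a) (f b)))
    (hpres_tau : ∀ a ∈ A₁, ∀ b ∈ A₁, τ₁ a b = τ₂ (f a) (f b))
    (hcompat : ∀ a ∈ A₁, ((∃ q, ll₁ a q) ↔ (∃ q, ll₂ (f a) q)) ∧
      ((∃ q, ll₁ q a) ↔ (∃ q, ll₂ q (f a))))
    (cpc₁_causal : ∀ x y, le₁ x y → ∃ γ a b,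
      IsCausalCurveE (fun u w => edist u w) le₁ γ a b ∧ γ a = x ∧ γ b = y)
    (cpc₁_timelike : ∀ x y, ll₁ x y → ∃ γ a b,
      IsCausalCurveE (fun u w => edist u w) ll₁ γ a b ∧ γ a = x ∧ γ b = y)
    (cpc₂_causal : ∀ x y, le₂ x y → ∃ γ a b,
      IsCausalCurveE (fun u w => edist u w) le₂ γ a b ∧ γ a = x ∧ γ b = y)
    (cpc₂_timelike : ∀ x y, ll₂ x y → ∃ γ a b,
      IsCausalCurveE (fun u w => edist u w) ll₂ γ a b ∧ γ a = x ∧ γ b = y)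
    :
    (∀ x y : X₁ ⊕ X₂, quotRel (sumRel le₁ le₂) (glueEqv A₁ f) x y →
      ∃ γ a b, IsCausalCurveE (qDist A₁ f) (qRel A₁ f (sumRel le₁ le₂)) γ a b ∧
        γ a = Quotient.mk (glueSetoid A₁ f) x ∧ γ b = Quotient.mk (glueSetoid A₁ f) y) ∧
    (∀ x y : X₁ ⊕ X₂, quotRel (sumRel ll₁ ll₂) (glueEqv A₁ f) x y →
      ∃ γ a b, IsCausalCurveE (qDist A₁ f) (qRel A₁ f (sumRel ll₁ ll₂)) γ a b ∧
        γ a = Quotient.mk (glueSetoid A₁ f) x ∧ γ b = Quotient.mk (glueSetoid A₁ f) y) := by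
  exact ⟨fun x y h => amalg_curve cpc₁_causal cpc₂_causal h,
    fun x y h => amalg_curve cpc₁_timelike cpc₂_timelike h⟩
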